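/- For 𝒫 = (Jo^r, DP^r) and all n ≥ 1, the cost of local monotonicity on the class 𝔚 of weighted games satisfies c_𝒫(n,𝔚) ≥ 1 − 2(3n−2)/n², and in particular c_𝒫(n,𝔚) ≥ 1 − 6/n. -/

import Mathlib

open scoped Classical

/-- A simple game on the player set `{1,…,n}` (modeled as `Fin n`):
a monotone map from coalitions to `{0,1}` (modeled as `Bool`) that is
`0` on the empty coalition and `1` on the grand coalition. -/
structure SimpleGame (n : ℕ) where
  win : Finset (Fin n) → Bool
  win_empty : win ∅ = false
  win_univ : win Finset.univ = true
  win_mono : ∀ ⦃S T : Finset (Fin n)⦄, S ⊆ T → win S = true → win T = true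

namespace SimpleGame

variable {n : ℕ}

/-- Player `i` dominates player `j`: `v((S ∪ {i}) \ {j}) ≥ v(S)` for every
coalition `S` with `j ∈ S` and `i ∉ S`. -/
def Dominates (v : SimpleGame n) (i j : Fin n) : Prop :=
  ∀ S : Finset (Fin n), j ∈ S → i ∉ S → v.win S ≤ v.win ((S ∪ {i}) \ {j})

/-- The game is complete if the dominance relation is a total preorder. -/
def IsComplete (v : SimpleGame n) : Prop :=
  (∀ i, v.Dominates i i) ∧
  (∀ i j, v.Dominates i j ∨ v.Dominates j i) ∧
  (∀ i j k, v.Dominates i j → v.Dominates j k → v.Dominates i k)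

/-- `S` is a minimal winning coalition: winning and every proper subset is losing. -/
def IsMWC (v : SimpleGame n) (S : Finset (Fin n)) : Prop :=
  v.win S = true ∧ ∀ T ⊂ S, v.win T = false

/-- `M_i`: the set of minimal winning coalitions containing player `i`. -/
noncomputable def Mset (v : SimpleGame n) (i : Fin n) : Finset (Finset (Fin n)) :=
  Finset.univ.filter fun S => v.IsMWC S ∧ i ∈ S

/-- `M_i(l)`: minimal winning coalitions of cardinality `l` containing `i`. -/
noncomputable def Mlset (v : SimpleGame n) (i : Fin n) (l : ℕ) : Finset (Finset (Fin n)) :=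
  (v.Mset i).filter fun S => S.card = l

/-- Raw Public Good index: `PGI^r_i(v) = |M_i|`. -/
noncomputable def PGI (v : SimpleGame n) (i : Fin n) : ℕ := (v.Mset i).card

/-- Raw Deegan-Packel index: `DP^r_i(v) = Σ_{S ∈ M_i} 1/|S|`. -/
noncomputable def DP (v : SimpleGame n) (i : Fin n) : ℝ :=
  ∑ S ∈ v.Mset i, (1 : ℝ) / (S.card : ℝ)

/-- The game is uniform if all minimal winning coalitions have the same cardinality. -/
def IsUniform (v : SimpleGame n) : Prop :=
  ∀ S T, v.IsMWC S → v.IsMWC T → S.card = T.card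

/-- `[q; w]` is a weighted representation of `v`. -/
def IsWeightedRep (v : SimpleGame n) (q : ℝ) (w : Fin n → ℝ) : Prop :=
  0 < q ∧ (∀ i, 0 ≤ w i) ∧ ∀ S : Finset (Fin n), v.win S = true ↔ q ≤ ∑ i ∈ S, w i

/-- The game is weighted. -/
def IsWeighted (v : SimpleGame n) : Prop := ∃ q w, v.IsWeightedRep q w

/-- `D_i`: coalitions decisive for player `i`. -/
noncomputable def Dset (v : SimpleGame n) (i : Fin n) : Finset (Finset (Fin n)) :=
  Finset.univ.filter fun S => i ∈ S ∧ v.win S = true ∧ v.win (S.erase i) = false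

/-- Raw Banzhaf index: `Bz^r_i(v) = |D_i|`. -/
noncomputable def Bz (v : SimpleGame n) (i : Fin n) : ℕ := (v.Dset i).card

/-- `S` is a shift-minimal winning coalition. -/
def IsSMWC (v : SimpleGame n) (S : Finset (Fin n)) : Prop :=
  v.IsMWC S ∧ ∀ i ∈ S, ∀ j ∉ S, v.Dominates i j → ¬ v.Dominates j i →
    v.win ((S \ {i}) ∪ {j}) = false

/-- `𝒮_i`: the set of shift-minimal winning coalitions containing player `i`. -/
noncomputable def Sset (v : SimpleGame n) (i : Fin n) : Finset (Finset (Fin n)) :=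
  Finset.univ.filter fun S => v.IsSMWC S ∧ i ∈ S

/-- Raw Shift index: `S^r_i(v) = |𝒮_i|`. -/
noncomputable def ShiftIdx (v : SimpleGame n) (i : Fin n) : ℕ := (v.Sset i).card

/-- The number of players for which the coalition `S` is decisive. -/
noncomputable def numDecisive (v : SimpleGame n) (S : Finset (Fin n)) : ℕ :=
  (Finset.univ.filter fun k => k ∈ S ∧ v.win S = true ∧ v.win (S.erase k) = false).card

/-- Raw Johnston index: `Jo^r_i(v) = Σ_{S ∈ D_i} 1/#{decisive players of S}`. -/
noncomputable def Jo (v : SimpleGame n) (i : Fin n) : ℝ :=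
  ∑ S ∈ v.Dset i, (1 : ℝ) / (v.numDecisive S : ℝ)

/-- `i` is a null player: it belongs to no minimal winning coalition. -/
def IsNull (v : SimpleGame n) (i : Fin n) : Prop := ∀ S, v.IsMWC S → i ∉ S

end SimpleGame

/-- A power index: assigns to every `n`-player simple game a vector in `ℝ^n`. -/
abbrev PowerIndex : Type := ∀ n : ℕ, SimpleGame n → Fin n → ℝ

/-- A class of games (one set of games for every number of players). -/
abbrev GameClass : Type := ∀ n : ℕ, Set (SimpleGame n)

/-- Convex combination `P^α = Σ_h α_h P^h` of power indices. -/
noncomputable def convexComb {r : ℕ} (α : Fin r → ℝ) (P : Fin r → PowerIndex) : PowerIndex :=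
  fun n v i => ∑ h, α h * P h n v i

/-- `Q` satisfies local monotonicity on the `n`-player games of `𝔊`. -/
def LMon (𝔊 : GameClass) (n : ℕ) (Q : PowerIndex) : Prop :=
  ∀ v ∈ 𝔊 n, ∀ i j : Fin n, v.Dominates i j → Q n v j ≤ Q n v i

/-- The cost of local monotonicity `c_𝒫(n,𝔊)`. -/
noncomputable def costLM {r : ℕ} [NeZero r] (P : Fin r → PowerIndex) (n : ℕ)
    (𝔊 : GameClass) : ℝ :=
  sInf {β : ℝ | β ∈ Set.Icc (0 : ℝ) 1 ∧
    ∀ α ∈ stdSimplex ℝ (Fin r), β ≤ α 0 → LMon 𝔊 n (convexComb α P)}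

/-- The raw Banzhaf index as a power index. -/
noncomputable def BzPI : PowerIndex := fun _ v i => (v.Bz i : ℝ)

/-- The raw Public Good index as a power index. -/
noncomputable def PGIPI : PowerIndex := fun _ v i => (v.PGI i : ℝ)

/-- The raw Shift index as a power index. -/
noncomputable def ShiftPI : PowerIndex := fun _ v i => (v.ShiftIdx i : ℝ)

/-- The raw Johnston index as a power index. -/
noncomputable def JoPI : PowerIndex := fun _ v i => v.Jo i

/-- The raw Deegan-Packel index as a power index. -/
noncomputable def DPPI : PowerIndex := fun _ v i => v.DP i

/-- `𝔚`: the class of weighted games. -/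
def WeightedClass : GameClass := fun _ => {v | v.IsWeighted}

namespace SimpleGame
variable {n : ℕ}

lemma mem_Dset {v : SimpleGame n} {i : Fin n} {S : Finset (Fin n)} :
    S ∈ v.Dset i ↔ i ∈ S ∧ v.win S = true ∧ v.win (S.erase i) = false := by
  simp [Dset]

lemma dom_swap {v : SimpleGame n} {i j : Fin n} (h : v.Dominates i j) (hij : i ≠ j)
    {S : Finset (Fin n)} (hj : j ∈ S) (hi : i ∉ S) (hw : v.win S = true) :
    v.win (insert i (S.erase j)) = true := by
  have hset : (S ∪ {i}) \ {j} = insert i (S.erase j) := by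
    ext x
    simp only [Finset.mem_sdiff, Finset.mem_union, Finset.mem_singleton,
      Finset.mem_insert, Finset.mem_erase]
    constructor
    · rintro ⟨hx | hx, hxj⟩
      · exact Or.inr ⟨hxj, hx⟩
      · exact Or.inl hx
    · rintro (rfl | ⟨hxj, hx⟩)
      · exact ⟨Or.inr rfl, hij⟩
      · exact ⟨Or.inl hx, hxj⟩
  have := h S hj hi
  rw [hw, hset] at this
  exact top_le_iff.mp this

lemma numDecisive_pos {v : SimpleGame n} {i : Fin n} {S : Finset (Fin n)}
    (hS : S ∈ v.Dset i) : 0 < v.numDecisive S := by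
  rw [mem_Dset] at hS
  exact Finset.card_pos.mpr ⟨i, by simp [hS.1, hS.2.1, hS.2.2]⟩

set_option maxHeartbeats 1000000 in
lemma jo_lm (v : SimpleGame n) (i j : Fin n) (h : v.Dominates i j) : v.Jo j ≤ v.Jo i := by
  rcases eq_or_ne i j with rfl | hij
  · exact le_refl _
  classical
  set φ : Finset (Fin n) → Finset (Fin n) :=
    fun S => if i ∈ S then S else insert i (S.erase j) with hφ
  have hmaps : ∀ S ∈ v.Dset j, φ S ∈ v.Dset i := by
    intro S hS
    rw [mem_Dset] at hS
    obtain ⟨hjS, hwS, hwe⟩ := hS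
    by_cases hiS : i ∈ S
    · simp only [hφ, if_pos hiS, mem_Dset]
      refine ⟨hiS, hwS, ?_⟩
      -- erase i losing: dominance on S.erase i
      have hj' : j ∈ S.erase i := Finset.mem_erase.mpr ⟨hij.symm, hjS⟩
      have hi' : i ∉ S.erase i := Finset.notMem_erase _ _
      have := h (S.erase i) hj' hi'
      have hset : ((S.erase i) ∪ {i}) \ {j} = S.erase j := by
        ext x
        simp only [Finset.mem_sdiff, Finset.mem_union, Finset.mem_singleton,
          Finset.mem_erase]
        constructor
        · rintro ⟨hx | rfl, hxj⟩
          · exact ⟨hxj, hx.2⟩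
          · exact ⟨hxj, hiS⟩
        · rintro ⟨hxj, hx⟩
          rcases eq_or_ne x i with rfl | hxi
          · exact ⟨Or.inr rfl, hxj⟩
          · exact ⟨Or.inl ⟨hxi, hx⟩, hxj⟩
      rw [hset, hwe] at this
      cases hx : v.win (S.erase i)
      · rfl
      · rw [hx] at this; exact absurd this (by simp)
    · simp only [hφ, if_neg hiS, mem_Dset]
      refine ⟨Finset.mem_insert_self _ _, dom_swap h hij hjS hiS hwS, ?_⟩
      have : (insert i (S.erase j)).erase i = S.erase j := by
        rw [Finset.erase_insert]
        simp [hiS]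
      rw [this]
      exact hwe
  have hjnot : ∀ S : Finset (Fin n), i ∉ S → j ∉ insert i (S.erase j) := by
    intro S hiS hmem
    rcases Finset.mem_insert.mp hmem with hji | hje
    · exact hij hji.symm
    · exact (Finset.mem_erase.mp hje).1 rfl
  have hnd : ∀ S ∈ v.Dset j, v.numDecisive (φ S) ≤ v.numDecisive S := by
    intro S hS
    rw [mem_Dset] at hS
    obtain ⟨hjS, hwS, hwe⟩ := hS
    by_cases hiS : i ∈ S
    · simp only [hφ, if_pos hiS]; exact le_refl _
    · simp only [hφ, if_neg hiS]
      set S' := insert i (S.erase j) with hS'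
      apply Finset.card_le_card_of_injOn (fun k => if k = i then j else k)
      · intro k hk
        simp only [Finset.mem_coe, Finset.mem_filter, Finset.mem_univ, true_and] at hk ⊢
        obtain ⟨hkS', hwS', hkER⟩ := hk
        by_cases hki : k = i
        · subst hki
          simp only [if_pos rfl]
          exact ⟨hjS, hwS, hwe⟩
        · simp only [if_neg hki]
          have hkSe : k ∈ S.erase j := by
            rcases Finset.mem_insert.mp hkS' with h1 | h1
            · exact absurd h1 hki
            · exact h1
          obtain ⟨hkj, hkS⟩ := Finset.mem_erase.mp hkSe
          refine ⟨hkS, hwS, ?_⟩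
          have hjk : j ∈ S.erase k := Finset.mem_erase.mpr ⟨fun hh => hkj hh.symm, hjS⟩
          have hik : i ∉ S.erase k := fun hh => hiS (Finset.mem_of_mem_erase hh)
          have hdom := h (S.erase k) hjk hik
          have hset : ((S.erase k) ∪ {i}) \ {j} = S'.erase k := by
            ext x
            simp only [Finset.mem_sdiff, Finset.mem_union, Finset.mem_singleton,
              Finset.mem_erase, Finset.mem_insert, hS']
            constructor
            · rintro ⟨⟨hxk, hxS⟩ | rfl, hxj⟩
              · exact ⟨hxk, Or.inr ⟨hxj, hxS⟩⟩
              · exact ⟨fun hh => hki hh.symm, Or.inl rfl⟩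
            · rintro ⟨hxk, rfl | ⟨hxj, hxS⟩⟩
              · exact ⟨Or.inr rfl, hij⟩
              · exact ⟨Or.inl ⟨hxk, hxS⟩, hxj⟩
          rw [hset] at hdom
          rw [hkER] at hdom
          cases hx : v.win (S.erase k)
          · rfl
          · rw [hx] at hdom; exact absurd hdom (by simp)
      · intro k1 hk1 k2 hk2 heq
        simp only [Finset.mem_coe, Finset.mem_filter] at hk1 hk2
        have hk1S' : k1 ∈ S' := hk1.2.1
        have hk2S' : k2 ∈ S' := hk2.2.1
        have hjS' : j ∉ S' := hjnot S hiS
        have heq' : (if k1 = i then j else k1) = (if k2 = i then j else k2) := heq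
        by_cases h1 : k1 = i <;> by_cases h2 : k2 = i
        · rw [h1, h2]
        · rw [if_pos h1, if_neg h2] at heq'
          exact absurd (heq' ▸ hk2S') hjS'
        · rw [if_neg h1, if_pos h2] at heq'
          exact absurd (heq'.symm ▸ hk1S') hjS'
        · rwa [if_neg h1, if_neg h2] at heq'
  have hinj : ∀ S₁ ∈ v.Dset j, ∀ S₂ ∈ v.Dset j, φ S₁ = φ S₂ → S₁ = S₂ := by
    intro S₁ hS₁ S₂ hS₂ heq
    rw [mem_Dset] at hS₁ hS₂
    by_cases h1 : i ∈ S₁ <;> by_cases h2 : i ∈ S₂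
    · simp only [hφ, if_pos h1, if_pos h2] at heq
      exact heq
    · exfalso
      simp only [hφ, if_pos h1, if_neg h2] at heq
      exact hjnot S₂ h2 (heq ▸ hS₁.1)
    · exfalso
      simp only [hφ, if_neg h1, if_pos h2] at heq
      exact hjnot S₁ h1 (heq.symm ▸ hS₂.1)
    · simp only [hφ, if_neg h1, if_neg h2] at heq
      have e1 : S₁.erase j = S₂.erase j := by
        have := congrArg (fun T => Finset.erase T i) heq
        simpa [Finset.erase_insert (fun hh => h1 (Finset.mem_of_mem_erase hh)),
          Finset.erase_insert (fun hh => h2 (Finset.mem_of_mem_erase hh))] using this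
      have := congrArg (insert j) e1
      rwa [Finset.insert_erase hS₁.1, Finset.insert_erase hS₂.1] at this
  unfold Jo
  calc ∑ S ∈ v.Dset j, (1 : ℝ) / (v.numDecisive S : ℝ)
      ≤ ∑ S ∈ v.Dset j, (1 : ℝ) / (v.numDecisive (φ S) : ℝ) := by
        apply Finset.sum_le_sum
        intro S hS
        have h1 : 0 < v.numDecisive (φ S) := numDecisive_pos (hmaps S hS)
        apply one_div_le_one_div_of_le
        · exact_mod_cast h1
        · exact_mod_cast hnd S hS
    _ = ∑ T ∈ (v.Dset j).image φ, (1 : ℝ) / (v.numDecisive T : ℝ) :=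
        by rw [Finset.sum_image hinj]
    _ ≤ ∑ T ∈ v.Dset i, (1 : ℝ) / (v.numDecisive T : ℝ) := by
        apply Finset.sum_le_sum_of_subset_of_nonneg
        · intro T hT
          obtain ⟨S, hS, rfl⟩ := Finset.mem_image.mp hT
          exact hmaps S hS
        · intro T _ _
          positivity

end SimpleGame


namespace CostLM
open Finset

def Bigs (n g : ℕ) : Finset (Fin n) := Finset.univ.filter (fun i : Fin n => (i : ℕ) < g)

lemma mem_Bigs {n g : ℕ} {i : Fin n} : i ∈ Bigs n g ↔ (i : ℕ) < g := by simp [Bigs]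

lemma card_Bigs {n g : ℕ} (h : g < n) : (Bigs n g).card = g := by
  have he : Bigs n g = Finset.Iio (⟨g, h⟩ : Fin n) := by
    ext x; simp [Bigs, Fin.lt_def]
  rw [he, Fin.card_Iio]

noncomputable def game (n g : ℕ) (hg : 1 ≤ g) (hn : g < n) : SimpleGame n where
  win S := decide (g + 1 ≤ S.card ∨ S = Bigs n g)
  win_empty := by
    have h0 : (⟨0, lt_of_le_of_lt (Nat.zero_le g) hn⟩ : Fin n) ∈ Bigs n g := by
      rw [mem_Bigs]
      exact hg
    simp only [decide_eq_false_iff_not]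
    rintro (h | h)
    · simp at h
    · exact absurd (h ▸ h0) (Finset.notMem_empty _)
  win_univ := by
    simp only [decide_eq_true_eq]
    left
    simpa using hn
  win_mono := by
    intro S T hST hS
    simp only [decide_eq_true_eq] at hS ⊢
    rcases hS with hc | rfl
    · exact Or.inl (le_trans hc (Finset.card_le_card hST))
    · by_cases hT : g + 1 ≤ T.card
      · exact Or.inl hT
      · right
        push_neg at hT
        exact (Finset.eq_of_subset_of_card_le hST
          (by rw [card_Bigs hn]; omega)).symm

lemma game_win_iff {n g : ℕ} (hg : 1 ≤ g) (hn : g < n) (S : Finset (Fin n)) :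
    (game n g hg hn).win S = true ↔ g + 1 ≤ S.card ∨ S = Bigs n g := by
  simp [game]

lemma filter_card_le {n g : ℕ} (hn : g < n) (S : Finset (Fin n)) :
    (S.filter fun i : Fin n => (i : ℕ) < g).card ≤ g := by
  calc (S.filter fun i : Fin n => (i : ℕ) < g).card ≤ (Bigs n g).card := by
        apply Finset.card_le_card
        intro x hx
        rw [mem_Bigs]
        exact (Finset.mem_filter.mp hx).2
    _ = g := card_Bigs hn

lemma key_nat {n g : ℕ} (hg : 1 ≤ g) (hn : g < n) (S : Finset (Fin n)) :
    (g + 1 ≤ S.card ∨ S = Bigs n g) ↔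
      g * (g + 1) ≤ g * S.card + (S.filter fun i : Fin n => (i : ℕ) < g).card := by
  have hb1 : (S.filter fun i : Fin n => (i : ℕ) < g).card ≤ S.card :=
    Finset.card_le_card (Finset.filter_subset _ _)
  have hb2 : (S.filter fun i : Fin n => (i : ℕ) < g).card ≤ g := filter_card_le hn S
  constructor
  · rintro (hc | rfl)
    · calc g * (g + 1) ≤ g * S.card := Nat.mul_le_mul_left g hc
        _ ≤ _ := Nat.le_add_right _ _
    · have h1 : (Bigs n g).card = g := card_Bigs hn
      have h2 : ((Bigs n g).filter fun i : Fin n => (i : ℕ) < g) = Bigs n g := by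
        apply Finset.filter_true_of_mem
        intro x hx
        exact mem_Bigs.mp hx
      rw [h1, h2, h1]
      ring_nf
      exact le_refl _
  · intro hle
    by_contra hcon
    push_neg at hcon
    obtain ⟨hc, hne⟩ := hcon
    have hc' : S.card ≤ g := by omega
    rcases lt_or_eq_of_le hc' with hlt | heqg
    · have h1 : g * S.card + (S.filter fun i : Fin n => (i : ℕ) < g).card ≤ (g + 1) * S.card := by
        calc g * S.card + _ ≤ g * S.card + S.card := by omega
          _ = (g + 1) * S.card := by ring
      have h2 : (g + 1) * S.card < (g + 1) * g := by
        exact mul_lt_mul_of_pos_left hlt (by omega)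
      have : g * (g + 1) = (g + 1) * g := by ring
      omega
    · -- S.card = g, S ≠ Bigs: filter card < g
      have hblt : (S.filter fun i : Fin n => (i : ℕ) < g).card < g := by
        rcases lt_or_eq_of_le hb2 with h | h
        · exact h
        · exfalso
          have hfeq : (S.filter fun i : Fin n => (i : ℕ) < g) = S :=
            Finset.eq_of_subset_of_card_le (Finset.filter_subset _ _) (by omega)
          have hSB : S ⊆ Bigs n g := by
            intro x hx
            rw [mem_Bigs]
            have : x ∈ S.filter fun i : Fin n => (i : ℕ) < g := hfeq.symm ▸ hx
            exact (Finset.mem_filter.mp this).2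
          exact hne (Finset.eq_of_subset_of_card_le hSB (by rw [card_Bigs hn]; omega))
      have : g * S.card = g * g := by rw [heqg]
      nlinarith
lemma game_weighted {n g : ℕ} (hg : 1 ≤ g) (hn : g < n) :
    (game n g hg hn).IsWeighted := by
  classical
  refine ⟨(g * (g + 1) : ℕ), fun i => if (i : ℕ) < g then ((g : ℝ) + 1) else g, ?_, ?_, ?_⟩
  · have : (0:ℕ) < g * (g+1) := by positivity
    exact_mod_cast this
  · intro i; dsimp only; split <;> positivity
  · intro S
    have hsum : ∑ i ∈ S, (if (i : ℕ) < g then ((g : ℝ) + 1) else g) =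
        ((g * S.card + (S.filter fun i : Fin n => (i : ℕ) < g).card : ℕ) : ℝ) := by
      have hpt : ∀ i : Fin n, (if (i : ℕ) < g then ((g : ℝ) + 1) else g) =
          g + (if (i : ℕ) < g then (1 : ℝ) else 0) := by
        intro i; split <;> ring
      rw [Finset.sum_congr rfl (fun i _ => hpt i), Finset.sum_add_distrib,
        Finset.sum_const, Finset.sum_boole, nsmul_eq_mul]
      push_cast
      ring
    rw [hsum, game_win_iff hg hn, key_nat hg hn S, Nat.cast_le]

lemma union_sdiff_eq' {α : Type*} [DecidableEq α] {S : Finset α} {i j : α} (hij : i ≠ j) :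
    (S ∪ {i}) \ {j} = insert i (S.erase j) := by
  ext x
  simp only [Finset.mem_sdiff, Finset.mem_union, Finset.mem_singleton, Finset.mem_insert,
    Finset.mem_erase]
  constructor
  · rintro ⟨hx | rfl, hxj⟩
    · exact Or.inr ⟨hxj, hx⟩
    · exact Or.inl rfl
  · rintro (rfl | ⟨hxj, hx⟩)
    · exact ⟨Or.inr rfl, hij⟩
    · exact ⟨Or.inl hx, hxj⟩

lemma game_win_false_iff {n g : ℕ} (hg : 1 ≤ g) (hn : g < n) (S : Finset (Fin n)) :
    (game n g hg hn).win S = false ↔ ¬(g + 1 ≤ S.card ∨ S = Bigs n g) := by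
  rw [← game_win_iff hg hn]
  cases h : (game n g hg hn).win S <;> simp [h]

lemma game_dominates {n g : ℕ} (hg : 1 ≤ g) (hn : g < n) {i j : Fin n}
    (hi : (i : ℕ) < g) (hj : ¬ (j : ℕ) < g) :
    (game n g hg hn).Dominates i j := by
  intro S hjS hiS
  have hij : i ≠ j := fun h => hj (h ▸ hi)
  rcases Bool.eq_false_or_eq_true ((game n g hg hn).win S) with hw | hw
  swap
  · rw [hw]; exact Bool.false_le _
  · rw [hw]
    have hcard : g + 1 ≤ S.card := by
      rcases (game_win_iff hg hn S).mp hw with h | rfl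
      · exact h
      · exact absurd (mem_Bigs.mp hjS) hj
    have hT : (S ∪ {i}) \ {j} = insert i (S.erase j) := union_sdiff_eq' hij
    have hTcard : ((S ∪ {i}) \ {j}).card = S.card := by
      rw [hT, Finset.card_insert_of_notMem (fun h => hiS (Finset.mem_of_mem_erase h)),
        Finset.card_erase_of_mem hjS]
      omega
    have : (game n g hg hn).win ((S ∪ {i}) \ {j}) = true := by
      rw [game_win_iff hg hn]
      exact Or.inl (by omega)
    rw [this]

/-- the family of `(g+1)`-coalitions containing `p` -/
noncomputable def W (n g : ℕ) (p : Fin n) : Finset (Finset (Fin n)) :=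
  Finset.univ.filter fun S => S.card = g + 1 ∧ p ∈ S

lemma mem_W {n g : ℕ} {p : Fin n} {S : Finset (Fin n)} :
    S ∈ W n g p ↔ S.card = g + 1 ∧ p ∈ S := by simp [W]

lemma card_W_swap {n g : ℕ} (i j : Fin n) : (W n g i).card = (W n g j).card := by
  classical
  have hswap : ∀ S : Finset (Fin n), (S.image (Equiv.swap i j)).image (Equiv.swap i j) = S := by
    intro S
    rw [Finset.image_image]
    have : (Equiv.swap i j : Fin n → Fin n) ∘ (Equiv.swap i j) = id := by
      funext x; simp [Equiv.swap_apply_self]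
    rw [this, Finset.image_id]
  have hmem : ∀ (a b : Fin n) (S : Finset (Fin n)), S ∈ W n g a →
      S.image (Equiv.swap a b) ∈ W n g b := by
    intro a b S hS
    rw [mem_W] at hS ⊢
    refine ⟨by rw [Finset.card_image_of_injective _ (Equiv.injective _)]; exact hS.1, ?_⟩
    have hmm := Finset.mem_image_of_mem (Equiv.swap a b) hS.2
    rwa [Equiv.swap_apply_left] at hmm
  apply Finset.card_nbij' (fun S => S.image (Equiv.swap i j)) (fun S => S.image (Equiv.swap i j))
  · exact fun S hS => hmem i j S hS
  · intro S hS
    have := hmem j i S hS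
    rwa [Equiv.swap_comm] at this
  · exact fun S _ => hswap S
  · exact fun S _ => hswap S

lemma eq_insert_of_sub {n g : ℕ} (hn : g < n) {S : Finset (Fin n)} {j : Fin n}
    (hsub : Bigs n g ⊆ S) (hcard : S.card = g + 1) (hjS : j ∈ S) (hj : ¬ (j : ℕ) < g) :
    S = insert j (Bigs n g) := by
  have hjB : j ∉ Bigs n g := fun h => hj (mem_Bigs.mp h)
  have h1 : insert j (Bigs n g) ⊆ S := Finset.insert_subset hjS hsub
  have h2 : (insert j (Bigs n g)).card = g + 1 := by
    rw [Finset.card_insert_of_notMem hjB, card_Bigs hn]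
  exact (Finset.eq_of_subset_of_card_le h1 (by omega)).symm

lemma insert_mem_W {n g : ℕ} (hn : g < n) {j : Fin n} (hj : ¬ (j : ℕ) < g) :
    insert j (Bigs n g) ∈ W n g j := by
  rw [mem_W]
  have hjB : j ∉ Bigs n g := fun h => hj (mem_Bigs.mp h)
  exact ⟨by rw [Finset.card_insert_of_notMem hjB, card_Bigs hn], Finset.mem_insert_self _ _⟩

lemma Bigs_not_mem_W {n g : ℕ} (hn : g < n) (p : Fin n) : Bigs n g ∉ W n g p := by
  rw [mem_W, card_Bigs hn]
  intro h
  omega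

-- numDecisive computations
lemma ndec_Bigs {n g : ℕ} (hg : 1 ≤ g) (hn : g < n) :
    (game n g hg hn).numDecisive (Bigs n g) = g := by
  have hfil : (Finset.univ.filter fun k : Fin n => k ∈ Bigs n g ∧
      (game n g hg hn).win (Bigs n g) = true ∧
      (game n g hg hn).win ((Bigs n g).erase k) = false) = Bigs n g := by
    ext k
    simp only [Finset.mem_filter, Finset.mem_univ, true_and]
    constructor
    · exact fun h => h.1
    · intro hk
      refine ⟨hk, (game_win_iff hg hn _).mpr (Or.inr rfl), ?_⟩
      rw [game_win_false_iff hg hn]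
      push_neg
      constructor
      · rw [Finset.card_erase_of_mem hk, card_Bigs hn]; omega
      · intro h
        exact absurd (h ▸ hk) (Finset.notMem_erase _ _)
  rw [SimpleGame.numDecisive, hfil, card_Bigs hn]

lemma ndec_g1 {n g : ℕ} (hg : 1 ≤ g) (hn : g < n) {S : Finset (Fin n)}
    (hcard : S.card = g + 1) (hnsub : ¬ Bigs n g ⊆ S) :
    (game n g hg hn).numDecisive S = g + 1 := by
  have hwin : (game n g hg hn).win S = true := (game_win_iff hg hn _).mpr (Or.inl (by omega))
  have hfil : (Finset.univ.filter fun k : Fin n => k ∈ S ∧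
      (game n g hg hn).win S = true ∧ (game n g hg hn).win (S.erase k) = false) = S := by
    ext k
    simp only [Finset.mem_filter, Finset.mem_univ, true_and]
    constructor
    · exact fun h => h.1
    · intro hk
      refine ⟨hk, hwin, ?_⟩
      rw [game_win_false_iff hg hn]
      push_neg
      constructor
      · rw [Finset.card_erase_of_mem hk, hcard]; omega
      · intro h
        exact hnsub (h ▸ Finset.erase_subset _ _)
  rw [SimpleGame.numDecisive, hfil, hcard]

lemma ndec_g1_sub {n g : ℕ} (hg : 1 ≤ g) (hn : g < n) {S : Finset (Fin n)}
    (hcard : S.card = g + 1) (hsub : Bigs n g ⊆ S) :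
    (game n g hg hn).numDecisive S = g := by
  have hwin : (game n g hg hn).win S = true := (game_win_iff hg hn _).mpr (Or.inl (by omega))
  have hfil : (Finset.univ.filter fun k : Fin n => k ∈ S ∧
      (game n g hg hn).win S = true ∧ (game n g hg hn).win (S.erase k) = false) = Bigs n g := by
    ext k
    simp only [Finset.mem_filter, Finset.mem_univ, true_and]
    constructor
    · rintro ⟨hkS, -, hlose⟩
      by_contra hkB
      have hBsub : Bigs n g ⊆ S.erase k := fun b hb =>
        Finset.mem_erase.mpr ⟨fun hbk => hkB (hbk ▸ hb), hsub hb⟩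
      have : S.erase k = Bigs n g := by
        apply (Finset.eq_of_subset_of_card_le hBsub ?_).symm
        rw [Finset.card_erase_of_mem hkS, hcard, card_Bigs hn]
        omega
      rw [game_win_false_iff hg hn] at hlose
      exact hlose (Or.inr this)
    · intro hk
      have hkS : k ∈ S := hsub hk
      refine ⟨hkS, hwin, ?_⟩
      rw [game_win_false_iff hg hn]
      push_neg
      constructor
      · rw [Finset.card_erase_of_mem hkS, hcard]; omega
      · intro h
        exact absurd (h ▸ hk) (Finset.notMem_erase _ _)
  rw [SimpleGame.numDecisive, hfil, card_Bigs hn]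

lemma Dset_small {n g : ℕ} (hg : 1 ≤ g) (hn : g < n) {j : Fin n} (hj : ¬ (j : ℕ) < g) :
    (game n g hg hn).Dset j = (W n g j).erase (insert j (Bigs n g)) := by
  ext S
  rw [SimpleGame.mem_Dset, Finset.mem_erase, mem_W]
  constructor
  · rintro ⟨hjS, hwin, hlose⟩
    have hcard : g + 1 ≤ S.card := by
      rcases (game_win_iff hg hn S).mp hwin with h | rfl
      · exact h
      · exact absurd (mem_Bigs.mp hjS) hj
    have hcard' : S.card = g + 1 := by
      by_contra hcc
      have : g + 1 ≤ (S.erase j).card := by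
        rw [Finset.card_erase_of_mem hjS]; omega
      have := (game_win_iff hg hn _).mpr (Or.inl this)
      rw [this] at hlose; exact absurd hlose (by simp)
    refine ⟨?_, hcard', hjS⟩
    rintro rfl
    have : (insert j (Bigs n g)).erase j = Bigs n g :=
      Finset.erase_insert (fun h => hj (mem_Bigs.mp h))
    rw [this] at hlose
    have := (game_win_iff hg hn (Bigs n g)).mpr (Or.inr rfl)
    rw [this] at hlose; exact absurd hlose (by simp)
  · rintro ⟨hne, hcard, hjS⟩
    refine ⟨hjS, (game_win_iff hg hn _).mpr (Or.inl (by omega)), ?_⟩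
    rw [game_win_false_iff hg hn]
    push_neg
    constructor
    · rw [Finset.card_erase_of_mem hjS]; omega
    · intro hEB
      apply hne
      apply eq_insert_of_sub hn ?_ hcard hjS hj
      intro b hb
      exact Finset.mem_of_mem_erase (hEB ▸ hb : b ∈ S.erase j)

lemma Mset_small {n g : ℕ} (hg : 1 ≤ g) (hn : g < n) {j : Fin n} (hj : ¬ (j : ℕ) < g) :
    (game n g hg hn).Mset j = (W n g j).erase (insert j (Bigs n g)) := by
  ext S
  have hjB : j ∉ Bigs n g := fun h => hj (mem_Bigs.mp h)
  rw [Finset.mem_erase, mem_W]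
  simp only [SimpleGame.Mset, Finset.mem_filter, Finset.mem_univ, true_and]
  constructor
  · rintro ⟨⟨hwin, hmin⟩, hjS⟩
    have hcard : g + 1 ≤ S.card := by
      rcases (game_win_iff hg hn S).mp hwin with h | rfl
      · exact h
      · exact absurd (mem_Bigs.mp hjS) hj
    have hcard' : S.card = g + 1 := by
      by_contra hcc
      obtain ⟨T, hTsub, hTcard⟩ := Finset.exists_subset_card_eq (s := S) (n := g + 1) (by omega)
      have hTS : T ⊂ S := Finset.ssubset_iff_subset_ne.mpr
        ⟨hTsub, fun h => by rw [h] at hTcard; omega⟩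
      have := hmin T hTS
      rw [(game_win_iff hg hn T).mpr (Or.inl (by omega))] at this
      exact absurd this (by simp)
    refine ⟨?_, hcard', hjS⟩
    rintro rfl
    have hsub : Bigs n g ⊂ insert j (Bigs n g) := Finset.ssubset_insert hjB
    have := hmin _ hsub
    rw [(game_win_iff hg hn _).mpr (Or.inr rfl)] at this
    exact absurd this (by simp)
  · rintro ⟨hne, hcard, hjS⟩
    refine ⟨⟨(game_win_iff hg hn _).mpr (Or.inl (by omega)), ?_⟩, hjS⟩
    intro T hTS
    rw [game_win_false_iff hg hn]
    push_neg
    have hTcard : T.card < g + 1 := by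
      have := Finset.card_lt_card hTS
      omega
    refine ⟨by omega, ?_⟩
    rintro rfl
    exact hne (eq_insert_of_sub hn hTS.subset hcard hjS hj)

lemma Dset_big {n g : ℕ} (hg : 1 ≤ g) (hn : g < n) {i : Fin n} (hi : (i : ℕ) < g) :
    (game n g hg hn).Dset i = insert (Bigs n g) (W n g i) := by
  ext S
  have hiB : i ∈ Bigs n g := mem_Bigs.mpr hi
  rw [SimpleGame.mem_Dset, Finset.mem_insert, mem_W]
  constructor
  · rintro ⟨hiS, hwin, hlose⟩
    rcases (game_win_iff hg hn S).mp hwin with h | rfl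
    · right
      refine ⟨?_, hiS⟩
      by_contra hcc
      have : g + 1 ≤ (S.erase i).card := by
        rw [Finset.card_erase_of_mem hiS]; omega
      have := (game_win_iff hg hn _).mpr (Or.inl this)
      rw [this] at hlose; exact absurd hlose (by simp)
    · exact Or.inl rfl
  · rintro (rfl | ⟨hcard, hiS⟩)
    · refine ⟨hiB, (game_win_iff hg hn _).mpr (Or.inr rfl), ?_⟩
      rw [game_win_false_iff hg hn]
      push_neg
      refine ⟨by rw [Finset.card_erase_of_mem hiB, card_Bigs hn]; omega, ?_⟩
      intro h
      exact absurd (h ▸ hiB) (Finset.notMem_erase _ _)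
    · refine ⟨hiS, (game_win_iff hg hn _).mpr (Or.inl (by omega)), ?_⟩
      rw [game_win_false_iff hg hn]
      push_neg
      refine ⟨by rw [Finset.card_erase_of_mem hiS]; omega, ?_⟩
      intro h
      exact absurd (h ▸ hiB) (Finset.notMem_erase _ _)

lemma Mset_big {n g : ℕ} (hg : 1 ≤ g) (hn : g < n) {i : Fin n} (hi : (i : ℕ) < g) :
    (game n g hg hn).Mset i =
      insert (Bigs n g) ((W n g i).filter fun S => ¬ Bigs n g ⊆ S) := by
  ext S
  have hiB : i ∈ Bigs n g := mem_Bigs.mpr hi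
  rw [Finset.mem_insert, Finset.mem_filter, mem_W]
  simp only [SimpleGame.Mset, Finset.mem_filter, Finset.mem_univ, true_and]
  constructor
  · rintro ⟨⟨hwin, hmin⟩, hiS⟩
    rcases (game_win_iff hg hn S).mp hwin with h | rfl
    · right
      have hcard' : S.card = g + 1 := by
        by_contra hcc
        obtain ⟨T, hTsub, hTcard⟩ := Finset.exists_subset_card_eq (s := S) (n := g + 1) (by omega)
        have hTS : T ⊂ S := Finset.ssubset_iff_subset_ne.mpr
          ⟨hTsub, fun hh => by rw [hh] at hTcard; omega⟩
        have := hmin T hTS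
        rw [(game_win_iff hg hn T).mpr (Or.inl (by omega))] at this
        exact absurd this (by simp)
      refine ⟨⟨hcard', hiS⟩, ?_⟩
      intro hsub
      have hss : Bigs n g ⊂ S := Finset.ssubset_iff_subset_ne.mpr
        ⟨hsub, fun hh => by rw [← hh] at hcard'; rw [card_Bigs hn] at hcard'; omega⟩
      have := hmin _ hss
      rw [(game_win_iff hg hn _).mpr (Or.inr rfl)] at this
      exact absurd this (by simp)
    · exact Or.inl rfl
  · rintro (rfl | ⟨⟨hcard, hiS⟩, hnsub⟩)
    · refine ⟨⟨(game_win_iff hg hn _).mpr (Or.inr rfl), ?_⟩, hiB⟩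
      intro T hTS
      rw [game_win_false_iff hg hn]
      push_neg
      have h1 := Finset.card_lt_card hTS
      rw [card_Bigs hn] at h1
      exact ⟨by omega, fun hh => absurd (hh ▸ le_refl T) (by
        intro hcon
        exact (Finset.ssubset_iff_subset_ne.mp hTS).2 (by rw [hh]))⟩
    · refine ⟨⟨(game_win_iff hg hn _).mpr (Or.inl (by omega)), ?_⟩, hiS⟩
      intro T hTS
      rw [game_win_false_iff hg hn]
      push_neg
      have h1 := Finset.card_lt_card hTS
      refine ⟨by omega, ?_⟩
      rintro rfl
      exact hnsub hTS.subset

lemma card_W_sub {n g : ℕ} (hn : g < n) {i : Fin n} (hi : (i : ℕ) < g) :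
    ((W n g i).filter fun S => Bigs n g ⊆ S).card = n - g := by
  classical
  have hset : ((W n g i).filter fun S => Bigs n g ⊆ S) =
      (Bigs n g)ᶜ.image (fun s => insert s (Bigs n g)) := by
    apply Finset.Subset.antisymm
    · intro S hS
      rw [Finset.mem_filter, mem_W] at hS
      obtain ⟨⟨hcard, hiS⟩, hsub⟩ := hS
      have hsd : (S \ Bigs n g).card = 1 := by
        rw [Finset.card_sdiff_of_subset hsub, hcard, card_Bigs hn]
        omega
      obtain ⟨s, hs⟩ := Finset.card_eq_one.mp hsd
      have hsS : s ∈ S \ Bigs n g := hs ▸ Finset.mem_singleton_self s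
      rw [Finset.mem_sdiff] at hsS
      rw [Finset.mem_image]
      refine ⟨s, Finset.mem_compl.mpr hsS.2, ?_⟩
      have hu : Bigs n g ∪ (S \ Bigs n g) = S := Finset.union_sdiff_of_subset hsub
      rw [hs] at hu
      rw [← hu]
      ext x
      simp only [Finset.mem_insert, Finset.mem_union, Finset.mem_singleton]
      tauto
    · intro S hS
      rw [Finset.mem_image] at hS
      obtain ⟨s, hsc, rfl⟩ := hS
      have hsB : s ∉ Bigs n g := Finset.mem_compl.mp hsc
      rw [Finset.mem_filter, mem_W]
      exact ⟨⟨by rw [Finset.card_insert_of_notMem hsB, card_Bigs hn],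
        Finset.mem_insert_of_mem (mem_Bigs.mpr hi)⟩, Finset.subset_insert _ _⟩
  rw [hset, Finset.card_image_of_injOn, Finset.card_compl, card_Bigs hn, Fintype.card_fin]
  intro s hs t ht heq
  have hsB : s ∉ Bigs n g := Finset.mem_compl.mp (Finset.mem_coe.mp hs)
  have heq' : insert s (Bigs n g) = insert t (Bigs n g) := heq
  have : s ∈ insert t (Bigs n g) := heq' ▸ Finset.mem_insert_self s (Bigs n g)
  rcases Finset.mem_insert.mp this with h | h
  · exact h
  · exact absurd h hsB

lemma W_mem_not_sub {n g : ℕ} (hn : g < n) {j : Fin n} (hj : ¬ (j : ℕ) < g)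
    {S : Finset (Fin n)} (hS : S ∈ (W n g j).erase (insert j (Bigs n g))) :
    ¬ Bigs n g ⊆ S := by
  rw [Finset.mem_erase, mem_W] at hS
  intro hsub
  exact hS.1 (eq_insert_of_sub hn hsub hS.2.1 hS.2.2 hj)

lemma DP_small_val {n g : ℕ} (hg : 1 ≤ g) (hn : g < n) {j : Fin n} (hj : ¬ (j : ℕ) < g) :
    (game n g hg hn).DP j = (((W n g j).card : ℝ) - 1) / (g + 1) := by
  rw [SimpleGame.DP, Mset_small hg hn hj]
  have hconst : ∀ S ∈ (W n g j).erase (insert j (Bigs n g)),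
      (1 : ℝ) / (S.card : ℝ) = 1 / ((g : ℝ) + 1) := by
    intro S hS
    rw [Finset.mem_erase, mem_W] at hS
    rw [hS.2.1]
    push_cast
    ring_nf
  rw [Finset.sum_congr rfl hconst, Finset.sum_const,
    Finset.card_erase_of_mem (insert_mem_W hn hj), nsmul_eq_mul]
  have h1 : 1 ≤ (W n g j).card := Finset.card_pos.mpr ⟨_, insert_mem_W hn hj⟩
  rw [Nat.cast_sub h1]
  push_cast
  ring

lemma Jo_small_val {n g : ℕ} (hg : 1 ≤ g) (hn : g < n) {j : Fin n} (hj : ¬ (j : ℕ) < g) :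
    (game n g hg hn).Jo j = (((W n g j).card : ℝ) - 1) / (g + 1) := by
  rw [SimpleGame.Jo, Dset_small hg hn hj]
  have hconst : ∀ S ∈ (W n g j).erase (insert j (Bigs n g)),
      (1 : ℝ) / ((game n g hg hn).numDecisive S : ℝ) = 1 / ((g : ℝ) + 1) := by
    intro S hS
    have hnd := ndec_g1 hg hn ((mem_W.mp (Finset.mem_of_mem_erase hS)).1)
      (W_mem_not_sub hn hj hS)
    rw [hnd]
    push_cast
    ring_nf
  rw [Finset.sum_congr rfl hconst, Finset.sum_const,
    Finset.card_erase_of_mem (insert_mem_W hn hj), nsmul_eq_mul]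
  have h1 : 1 ≤ (W n g j).card := Finset.card_pos.mpr ⟨_, insert_mem_W hn hj⟩
  rw [Nat.cast_sub h1]
  push_cast
  ring

lemma DP_big_val {n g : ℕ} (hg : 1 ≤ g) (hn : g < n) {i : Fin n} (hi : (i : ℕ) < g) :
    (game n g hg hn).DP i = 1 / (g : ℝ) +
      ((((W n g i).filter fun S => ¬ Bigs n g ⊆ S).card : ℝ)) / (g + 1) := by
  rw [SimpleGame.DP, Mset_big hg hn hi]
  have hBnm : Bigs n g ∉ (W n g i).filter fun S => ¬ Bigs n g ⊆ S :=
    fun h => Bigs_not_mem_W hn i (Finset.mem_of_mem_filter _ h)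
  rw [Finset.sum_insert hBnm, card_Bigs hn]
  have hconst : ∀ S ∈ (W n g i).filter (fun S => ¬ Bigs n g ⊆ S),
      (1 : ℝ) / (S.card : ℝ) = 1 / ((g : ℝ) + 1) := by
    intro S hS
    rw [(mem_W.mp (Finset.mem_of_mem_filter _ hS)).1]
    push_cast
    ring_nf
  rw [Finset.sum_congr rfl hconst, Finset.sum_const, nsmul_eq_mul]
  ring

lemma Jo_big_val {n g : ℕ} (hg : 1 ≤ g) (hn : g < n) {i : Fin n} (hi : (i : ℕ) < g) :
    (game n g hg hn).Jo i = 1 / (g : ℝ) +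
      ((((W n g i).filter fun S => ¬ Bigs n g ⊆ S).card : ℝ)) / (g + 1) +
      ((n - g : ℕ) : ℝ) / g := by
  rw [SimpleGame.Jo, Dset_big hg hn hi]
  rw [Finset.sum_insert (Bigs_not_mem_W hn i), ndec_Bigs hg hn]
  rw [← Finset.sum_filter_add_sum_filter_not (W n g i) (fun S => Bigs n g ⊆ S)]
  have hc1 : ∀ S ∈ (W n g i).filter (fun S => Bigs n g ⊆ S),
      (1 : ℝ) / ((game n g hg hn).numDecisive S : ℝ) = 1 / (g : ℝ) := by
    intro S hS
    rw [Finset.mem_filter] at hS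
    rw [ndec_g1_sub hg hn (mem_W.mp hS.1).1 hS.2]
  have hc2 : ∀ S ∈ (W n g i).filter (fun S => ¬ Bigs n g ⊆ S),
      (1 : ℝ) / ((game n g hg hn).numDecisive S : ℝ) = 1 / ((g : ℝ) + 1) := by
    intro S hS
    rw [Finset.mem_filter] at hS
    rw [ndec_g1 hg hn (mem_W.mp hS.1).1 hS.2]
    push_cast
    ring_nf
  rw [Finset.sum_congr rfl hc1, Finset.sum_congr rfl hc2, Finset.sum_const, Finset.sum_const,
    nsmul_eq_mul, nsmul_eq_mul, card_W_sub hn hi]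
  ring

lemma one_mem_set (n : ℕ) :
    (1 : ℝ) ∈ {β : ℝ | β ∈ Set.Icc (0 : ℝ) 1 ∧
      ∀ α ∈ stdSimplex ℝ (Fin 2), β ≤ α 0 →
        LMon WeightedClass n (convexComb α ![JoPI, DPPI])} := by
  constructor
  · exact ⟨zero_le_one, le_refl 1⟩
  · intro α hα h1α
    obtain ⟨hpos, hsum⟩ := hα
    rw [Fin.sum_univ_two] at hsum
    have hα0 : α 0 = 1 := le_antisymm (by linarith [hpos 1]) h1α
    have hα1 : α 1 = 0 := by linarith
    intro v hv i j hdom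
    have e : ∀ x : Fin n, convexComb α ![JoPI, DPPI] n v x = v.Jo x := by
      intro x
      simp [convexComb, Fin.sum_univ_two, JoPI, DPPI, hα0, hα1]
    rw [e, e]
    exact SimpleGame.jo_lm v i j hdom

set_option maxHeartbeats 2000000 in
lemma beta_bound {n : ℕ} (hn6 : 6 ≤ n) {β : ℝ} (hβ0 : 0 ≤ β) (hβ1 : β ≤ 1)
    (hprop : ∀ α ∈ stdSimplex ℝ (Fin 2), β ≤ α 0 →
      LMon WeightedClass n (convexComb α ![JoPI, DPPI])) :
    1 - 2 * (3 * (n : ℝ) - 2) / (n : ℝ) ^ 2 ≤ β := by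
  classical
  set g : ℕ := n / 2 with hgdef
  have hg3 : 3 ≤ g := by omega
  have hg : 1 ≤ g := by omega
  have h2g : 2 * g ≤ n := by omega
  have h2g1 : n ≤ 2 * g + 1 := by omega
  have hn : g < n := by omega
  set i : Fin n := ⟨0, by omega⟩ with hidef
  set j : Fin n := ⟨g, hn⟩ with hjdef
  have hi : (i : ℕ) < g := by simp [hidef]; omega
  have hj : ¬ (j : ℕ) < g := by simp [hjdef]
  -- apply local monotonicity for α = (β, 1-β)
  have hmem : ![β, 1-β] ∈ stdSimplex ℝ (Fin 2) := by
    constructor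
    · intro x
      fin_cases x <;> simp <;> linarith
    · rw [Fin.sum_univ_two]
      simp
  have hα0 : (![β, 1-β] : Fin 2 → ℝ) 0 = β := rfl
  have hLMon := hprop _ hmem (le_of_eq hα0.symm)
  have hLM := hLMon (game n g hg hn) (game_weighted hg hn)
    i j (game_dominates hg hn hi hj)
  have econv : ∀ x : Fin n, convexComb ![β, 1-β] ![JoPI, DPPI] n (game n g hg hn) x =
      β * (game n g hg hn).Jo x + (1-β) * (game n g hg hn).DP x := by
    intro x
    simp [convexComb, Fin.sum_univ_two, JoPI, DPPI]
  rw [econv, econv] at hLM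
  -- plug in computed values
  have hpart : (n - g) + ((W n g i).filter fun S => ¬ Bigs n g ⊆ S).card = (W n g i).card := by
    rw [← card_W_sub hn hi]
    exact Finset.card_filter_add_card_filter_not _
  have hKeq : (W n g i).card = (W n g j).card := card_W_swap i j
  rw [Jo_small_val hg hn hj, DP_small_val hg hn hj, Jo_big_val hg hn hi,
    DP_big_val hg hn hi] at hLM
  -- real abbreviations
  set aN : ℝ := (((W n g i).filter fun S => ¬ Bigs n g ⊆ S).card : ℝ) with haN
  set G : ℝ := (g : ℝ) with hGdef
  set M : ℝ := ((n - g : ℕ) : ℝ) with hMdef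
  set K : ℝ := ((W n g j).card : ℝ) with hKdef
  have hKr : aN + M = K := by
    rw [haN, hKdef, hMdef, ← hKeq, ← hpart]
    push_cast
    ring
  have hG3 : (3 : ℝ) ≤ G := by rw [hGdef]; exact_mod_cast hg3
  have hM3 : (3 : ℝ) ≤ M := by
    rw [hMdef]
    have h33 : 3 ≤ n - g := by omega
    exact_mod_cast h33
  have hNM : (n : ℝ) = G + M := by
    rw [hGdef, hMdef, Nat.cast_sub (le_of_lt hn)]
    ring
  have hN1 : (n : ℝ) ≤ 2 * G + 1 := by
    rw [hGdef]
    exact_mod_cast h2g1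
  have hN2 : 2 * G ≤ (n : ℝ) := by
    rw [hGdef]
    exact_mod_cast h2g
  have hGpos : (0 : ℝ) < G := by linarith
  have hG1pos : (0 : ℝ) < G + 1 := by linarith
  have hMpos : (0 : ℝ) < M := by linarith
  have haNpos : (0 : ℝ) ≤ aN := by rw [haN]; positivity
  -- derive the key inequality from hLM
  have h1 : (aN + M - 1) / (G + 1) ≤ 1 / G + aN / (G + 1) + β * M / G := by
    have hlhs : β * ((K - 1) / (G + 1)) + (1 - β) * ((K - 1) / (G + 1))
        = (K - 1) / (G + 1) := by ring
    have hrhs : β * (1 / G + aN / (G + 1) + M / G) + (1 - β) * (1 / G + aN / (G + 1))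
        = 1 / G + aN / (G + 1) + β * M / G := by ring
    rw [hlhs, hrhs, ← hKr] at hLM
    exact hLM
  have hkey : G * (aN + M - 1) ≤ (G + 1) + G * aN + β * M * (G + 1) := by
    have h2 := mul_le_mul_of_nonneg_left h1 (le_of_lt (mul_pos hGpos hG1pos))
    have e1 : G * (G + 1) * ((aN + M - 1) / (G + 1)) = G * (aN + M - 1) := by
      field_simp
    have e2 : G * (G + 1) * (1 / G + aN / (G + 1) + β * M / G)
        = (G + 1) + G * aN + β * M * (G + 1) := by
      field_simp
    rw [e1, e2] at h2
    exact h2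
  have hβge : (G * M - 2 * G - 1) / (M * (G + 1)) ≤ β := by
    rw [div_le_iff₀ (by positivity)]
    nlinarith [hkey]
  refine le_trans ?_ hβge
  -- arithmetic: (n²-6n+4)/n² ≤ (GM-2G-1)/(M(G+1))
  have hn0 : (0 : ℝ) < (n : ℝ) := by
    have : (0:ℕ) < n := by omega
    exact_mod_cast this
  have hrw : 1 - 2 * (3 * (n : ℝ) - 2) / (n : ℝ) ^ 2
      = ((n : ℝ) ^ 2 - (6 * (n : ℝ) - 4)) / (n : ℝ) ^ 2 := by
    field_simp
    ring
  rw [hrw, div_le_div_iff₀ (by positivity) (by positivity)]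
  -- case on parity
  have hcase : n = 2 * g ∨ n = 2 * g + 1 := by omega
  rcases hcase with hc | hc
  · have hMG : M = G := by
      rw [hMdef, hGdef]
      have : n - g = g := by omega
      rw [this]
    have hNG : (n : ℝ) = 2 * G := by
      rw [hGdef]
      exact_mod_cast congrArg (Nat.cast : ℕ → ℝ) hc
    rw [hMG, hNG]
    nlinarith [hG3]
  · have hMG : M = G + 1 := by
      rw [hMdef, hGdef]
      have he : n - g = g + 1 := by omega
      rw [he]
      push_cast
      ring
    have hNG : (n : ℝ) = 2 * G + 1 := by
      rw [hGdef]
      exact_mod_cast congrArg (Nat.cast : ℕ → ℝ) hc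
    rw [hMG, hNG]
    nlinarith [hG3]
end CostLM

/-- for `𝒫 = (Jo^r, DP^r)` and `n ≥ 1`, the cost of local
monotonicity on weighted games is at least `1 - 2(3n-2)/n²`, and in particular
at least `1 - 6/n`. -/
theorem costLM_Jo_DP_lower_bound (n : ℕ) (hn : 1 ≤ n) :
    1 - 2 * (3 * (n : ℝ) - 2) / (n : ℝ) ^ 2 ≤ costLM ![JoPI, DPPI] n WeightedClass ∧
    1 - 6 / (n : ℝ) ≤ costLM ![JoPI, DPPI] n WeightedClass := by
  have hn0 : (0 : ℝ) < (n : ℝ) := by exact_mod_cast hn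
  have hmain : 1 - 2 * (3 * (n : ℝ) - 2) / (n : ℝ) ^ 2 ≤ costLM ![JoPI, DPPI] n WeightedClass := by
    unfold costLM
    apply le_csInf ⟨1, CostLM.one_mem_set n⟩
    rintro β ⟨⟨hβ0, hβ1⟩, hprop⟩
    by_cases h6 : 6 ≤ n
    · exact CostLM.beta_bound h6 hβ0 hβ1 hprop
    · have hle : 1 - 2 * (3 * (n : ℝ) - 2) / (n : ℝ) ^ 2 ≤ 0 := by
        interval_cases n <;> norm_num
      linarith
  refine ⟨hmain, le_trans ?_ hmain⟩
  rw [sub_le_sub_iff_left, div_le_div_iff₀ (by positivity) (by positivity)]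
  nlinarith [hn0]
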